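/- The weight matrix W is positive semidefinite: for every sorted probability distribution p_1 ≥ ⋯ ≥ p_N ≥ 0 and every 0 ≤ p ≤ 1/2, the symmetric N×N matrix W with entries W_{i,j} = max(0, (1−p)·min(p_i,p_j) − p·max(p_i,p_j)) for i ≠ j and diagonal entries W_{i,i} = (1−2p)·p_i is positive semidefinite. -/

import Mathlib

open Finset

noncomputable def guess (N : ℕ) (q : Fin N → ℝ) : ℝ :=
  Finset.univ.inf' ⟨1, Finset.mem_univ 1⟩
    (fun σ : Equiv.Perm (Fin N) => ∑ k : Fin N, ((k : ℝ) + 1) * q (σ k))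

noncomputable def guessA (N : ℕ) (q : Fin N → ℝ) (p : ℝ) (A : Finset (Fin N)) : ℝ :=
  ∑ y : Bool, Finset.univ.inf' ⟨1, Finset.mem_univ 1⟩
    (fun σ : Equiv.Perm (Fin N) => ∑ k : Fin N,
      ((k : ℝ) + 1) * q (σ k) * (if ((σ k ∈ A) ↔ (y = true)) then 1 - p else p))

noncomputable def guessOpt (N : ℕ) (q : Fin N → ℝ) (p : ℝ) : ℝ :=
  Finset.univ.inf' ⟨∅, Finset.mem_univ ∅⟩ (fun A : Finset (Fin N) => guessA N q p A)

def zigzag (N : ℕ) : Finset (Fin N) := Finset.univ.filter (fun k => (k : ℕ) % 2 = 0)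

noncomputable def wt (N : ℕ) (q : Fin N → ℝ) (p : ℝ) (i j : Fin N) : ℝ :=
  max 0 ((1 - p) * min (q i) (q j) - p * max (q i) (q j))

noncomputable def cut (N : ℕ) (q : Fin N → ℝ) (p : ℝ) (A : Finset (Fin N)) : ℝ :=
  ∑ i ∈ A, ∑ j ∈ Aᶜ, wt N q p i j

noncomputable def maxcut (N : ℕ) (q : Fin N → ℝ) (p : ℝ) : ℝ :=
  Finset.univ.sup' ⟨∅, Finset.mem_univ ∅⟩ (fun A : Finset (Fin N) => cut N q p A)

theorem stmt_14 (N : ℕ) (q : Fin N → ℝ)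
    (hnn : ∀ i, 0 ≤ q i) (hsum : ∑ i, q i = 1)
    (hsort : ∀ i j : Fin N, i ≤ j → q j ≤ q i)
    (p : ℝ) (hp0 : 0 ≤ p) (hp : p ≤ 1 / 2) :
    (Matrix.of fun i j : Fin N =>
      max 0 ((1 - p) * min (q i) (q j) - p * max (q i) (q j))).PosSemidef := by
  open MeasureTheory Set in
  have hp1 : (0:ℝ) ≤ 1 - p := by linarith
  set S : Fin N → Set ℝ := fun i => Set.Icc (p * q i) ((1 - p) * q i) with hSdef
  have hmeas : ∀ i, MeasurableSet (S i) := fun i => measurableSet_Icc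
  have hvol : ∀ i j, (volume (S i ∩ S j)).toReal
      = max 0 ((1 - p) * min (q i) (q j) - p * max (q i) (q j)) := by
    intro i j
    rw [hSdef]
    simp only [Set.Icc_inter_Icc, Real.volume_Icc, ENNReal.toReal_ofReal',
      ← mul_max_of_nonneg _ _ hp0, ← mul_min_of_nonneg _ _ hp1, max_comm]
  have hfin : ∀ i j : Fin N, volume (S i ∩ S j) < ⊤ := by
    intro i j
    apply lt_of_le_of_lt (measure_mono Set.inter_subset_left)
    rw [hSdef, Real.volume_Icc]; exact ENNReal.ofReal_lt_top
  rw [Matrix.posSemidef_iff_dotProduct_mulVec]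
  constructor
  · ext i j
    simp [Matrix.conjTranspose_apply, min_comm, max_comm]
  · intro x
    set g : Fin N → ℝ → ℝ := fun i => (S i).indicator (fun _ => x i) with hg
    have hmul : ∀ i j : Fin N, (fun t => g i t * g j t)
        = (S i ∩ S j).indicator (fun _ => x i * x j) := by
      intro i j
      funext t
      exact (Set.inter_indicator_mul (fun _ => x i) (fun _ => x j) t).symm
    have hint : ∀ i j : Fin N, Integrable (fun t => g i t * g j t) := by
      intro i j
      rw [hmul]
      rw [integrable_indicator_iff ((hmeas i).inter (hmeas j))]
      exact integrableOn_const (hfin i j).ne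
    have hI : ∀ i j : Fin N, ∫ t, g i t * g j t
        = x i * (volume (S i ∩ S j)).toReal * x j := by
      intro i j
      rw [hmul, integral_indicator_const _ ((hmeas i).inter (hmeas j)), smul_eq_mul, measureReal_def]
      ring
    have key : dotProduct (star x) ((Matrix.of fun i j : Fin N =>
        max 0 ((1 - p) * min (q i) (q j) - p * max (q i) (q j))).mulVec x)
        = ∫ t, (∑ i, g i t)^2 := by
      have : ∀ t : ℝ, (∑ i, g i t)^2 = ∑ i, ∑ j, g i t * g j t := by
        intro t; rw [sq, Finset.sum_mul_sum]
      simp_rw [this]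
      rw [integral_finset_sum _ (fun i _ => integrable_finset_sum _ (fun j _ => hint i j))]
      simp_rw [integral_finset_sum _ (fun j _ => hint _ j), hI, hvol]
      simp [dotProduct, Matrix.mulVec, Finset.mul_sum, mul_assoc, mul_comm, mul_left_comm]
    rw [key]
    exact integral_nonneg (fun t => sq_nonneg _)
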